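/- Let Ω₂(u) be the 2×2 matrix with entries Ω₂¹¹ = (4/3)u₁, Ω₂¹² = Ω₂²¹ = (2h/3)u₂, Ω₂²² = −(2h²/(3u₁))(u₂² − 6u₁^h), which is (a scalar multiple of) the inverse Hessian metric of u₁ = x₁²x₂² in the coordinates u₁ = x₁²x₂², u₂ = x₁^{2h}+x₂^{2h}. Then for e = u₁^{(h/2)(1+√3)} ∂_{u₂}, the Lie derivative Ω₁ = L_e Ω₂ has matrix Ω₁¹¹ = 0, Ω₁¹² = Ω₁²¹ = −(2h/√3)·u₁^{(1+√3)h/2}, Ω₁²² = −(2/3)(3+√3)h²·u₁^{(1+√3)h/2 − 1}·u₂. -/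

import Mathlib

open Real

/-- Partial derivative of a function of `n` real variables. -/
noncomputable def pd {n : ℕ} (i : Fin n) (f : (Fin n → ℝ) → ℝ) : (Fin n → ℝ) → ℝ :=
  fun t => deriv (fun s => f (Function.update t i s)) (t i)

/-- The intersection form `Ω₂` on the orbit space of the dicyclic group
(the inverse Hessian metric of `u₁ = x₁²x₂²` in coordinates `u₁, u₂`). -/
noncomputable def Ω₂dic (h : ℝ) (u : Fin 2 → ℝ) : Matrix (Fin 2) (Fin 2) ℝ :=
  !![4 / 3 * u 0, 2 * h / 3 * u 1;
     2 * h / 3 * u 1, -(2 * h ^ 2 / (3 * u 0)) * ((u 1) ^ 2 - 6 * (u 0) ^ h)]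

/-- The vector field `e = u₁^{(h/2)(1+√3)} ∂_{u₂}`. -/
noncomputable def eDic (h : ℝ) (i : Fin 2) (u : Fin 2 → ℝ) : ℝ :=
  if i = 0 then 0 else (u 0) ^ (h / 2 * (1 + Real.sqrt 3))

/-- The claimed matrix of the Lie derivative `Ω₁ = L_e Ω₂`. -/
noncomputable def Ω₁dic (h : ℝ) (u : Fin 2 → ℝ) : Matrix (Fin 2) (Fin 2) ℝ :=
  !![0, -(2 * h / Real.sqrt 3) * (u 0) ^ ((1 + Real.sqrt 3) * h / 2);
     -(2 * h / Real.sqrt 3) * (u 0) ^ ((1 + Real.sqrt 3) * h / 2),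
     -(2 / 3) * (3 + Real.sqrt 3) * h ^ 2 * (u 0) ^ ((1 + Real.sqrt 3) * h / 2 - 1) * u 1]

lemma pd_e0 (h : ℝ) (k : Fin 2) (u : Fin 2 → ℝ) : pd k (eDic h 0) u = 0 := by
  simp [pd, eDic]

lemma pd1_e1 (h : ℝ) (u : Fin 2 → ℝ) : pd 1 (eDic h 1) u = 0 := by
  simp [pd, eDic]

lemma pd0_e1 (h : ℝ) (u : Fin 2 → ℝ) (hu : u 0 ≠ 0) :
    pd 0 (eDic h 1) u
      = (h / 2 * (1 + Real.sqrt 3)) * (u 0) ^ (h / 2 * (1 + Real.sqrt 3) - 1) := by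
  simp only [pd, eDic, if_neg (by decide : (1:Fin 2) ≠ 0), Function.update_self]
  rw [Real.deriv_rpow_const (u 0) _]

lemma pd1_Ω00 (h : ℝ) (u : Fin 2 → ℝ) : pd 1 (fun v => Ω₂dic h v 0 0) u = 0 := by
  simp [pd, Ω₂dic]

lemma pd1_Ω01 (h : ℝ) (u : Fin 2 → ℝ) :
    pd 1 (fun v => Ω₂dic h v 0 1) u = 2 * h / 3 := by
  simp only [pd, Ω₂dic, Matrix.cons_val', Matrix.cons_val_zero, Matrix.cons_val_one,
    Matrix.head_cons, Matrix.empty_val', Matrix.cons_val_fin_one, Function.update_self]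
  simpa using ((hasDerivAt_id (u 1)).const_mul (2 * h / 3)).deriv

lemma pd1_Ω10 (h : ℝ) (u : Fin 2 → ℝ) :
    pd 1 (fun v => Ω₂dic h v 1 0) u = 2 * h / 3 := by
  simp only [pd, Ω₂dic, Matrix.cons_val', Matrix.cons_val_zero, Matrix.cons_val_one,
    Matrix.head_cons, Matrix.empty_val', Matrix.cons_val_fin_one, Function.update_self]
  simpa using ((hasDerivAt_id (u 1)).const_mul (2 * h / 3)).deriv

lemma pd1_Ω11 (h : ℝ) (u : Fin 2 → ℝ) :
    pd 1 (fun v => Ω₂dic h v 1 1) u = -(2 * h ^ 2 / (3 * u 0)) * (2 * u 1) := by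
  simp only [pd, Ω₂dic, Matrix.cons_val', Matrix.cons_val_zero, Matrix.cons_val_one,
    Matrix.head_cons, Matrix.empty_val', Matrix.cons_val_fin_one, Function.update_self,
    Function.update_of_ne (by decide : (0:Fin 2) ≠ 1)]
  have : (fun s : ℝ => -(2 * h ^ 2 / (3 * u 0)) * (s ^ 2 - 6 * (u 0) ^ h))
      = fun s : ℝ => -(2 * h ^ 2 / (3 * u 0)) * (s ^ 2 - 6 * (u 0) ^ h) := rfl
  have hd : HasDerivAt (fun s : ℝ => -(2 * h ^ 2 / (3 * u 0)) * (s ^ 2 - 6 * (u 0) ^ h))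
      (-(2 * h ^ 2 / (3 * u 0)) * (2 * u 1)) (u 1) := by
    have h1 : HasDerivAt (fun s : ℝ => s ^ 2 - 6 * (u 0) ^ h) (2 * u 1) (u 1) := by
      simpa using ((hasDerivAt_pow 2 (u 1)).sub_const (6 * (u 0) ^ h))
    simpa using h1.const_mul (-(2 * h ^ 2 / (3 * u 0)))
  exact hd.deriv

/-- The Lie derivative of `Ω₂` along `e = u₁^{(h/2)(1+√3)} ∂_{u₂}`, computed by
`(L_e Ω)^{ij} = f·∂_{u₂}Ω^{ij} - Ω^{kj}∂_{u_k}e^i - Ω^{ik}∂_{u_k}e^j`, equals `Ω₁`. -/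
theorem stmt_17 (h : ℝ) (hh : 0 < h) :
    ∀ u : Fin 2 → ℝ, 0 < u 0 → ∀ i j : Fin 2,
      eDic h 1 u * pd 1 (fun v => Ω₂dic h v i j) u
        - (∑ k : Fin 2, Ω₂dic h u k j * pd k (eDic h i) u)
        - (∑ k : Fin 2, Ω₂dic h u i k * pd k (eDic h j) u)
      = Ω₁dic h u i j := by
  intro u hu i j
  have hu0 : u 0 ≠ 0 := ne_of_gt hu
  have hs3 : Real.sqrt 3 ≠ 0 := by positivity
  have hs3sq : Real.sqrt 3 * Real.sqrt 3 = 3 := Real.mul_self_sqrt (by norm_num)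
  have hexp : h / 2 * (1 + Real.sqrt 3) = (1 + Real.sqrt 3) * h / 2 := by ring
  have hpow : (u 0) ^ ((1 + Real.sqrt 3) * h / 2 - 1) * u 0
      = (u 0) ^ ((1 + Real.sqrt 3) * h / 2) := by
    rw [Real.rpow_sub_one hu0]
    field_simp
  fin_cases i <;> fin_cases j <;>
    simp only [Fin.mk_zero, Fin.mk_one, Fin.isValue, Fin.sum_univ_two,
      pd1_Ω00, pd1_Ω01, pd1_Ω10, pd1_Ω11, pd_e0, pd1_e1, pd0_e1 h u hu0] <;>
    simp only [Ω₂dic, Ω₁dic, eDic, if_neg (by decide : (1:Fin 2) ≠ 0),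
      Matrix.cons_val', Matrix.cons_val_zero, Matrix.cons_val_one,
      Matrix.head_cons, Matrix.empty_val', Matrix.cons_val_fin_one, Matrix.head_fin_const,
      hexp, mul_zero, zero_mul, sub_zero, zero_sub, add_zero, zero_add, neg_zero] <;>
    rw [← hpow]
  · simp only [Matrix.of_apply, Matrix.cons_val', Matrix.cons_val_zero, Matrix.cons_val_one, Matrix.head_cons, Matrix.empty_val', Matrix.cons_val_fin_one]
  · simp only [Matrix.of_apply, Matrix.cons_val', Matrix.cons_val_zero, Matrix.cons_val_one, Matrix.head_cons, Matrix.empty_val', Matrix.cons_val_fin_one]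
    field_simp
    ring_nf
    rw [Real.sq_sqrt (by norm_num : (0:ℝ) ≤ 3)]
    ring
  · simp only [Matrix.of_apply, Matrix.cons_val', Matrix.cons_val_zero, Matrix.cons_val_one, Matrix.head_cons, Matrix.empty_val', Matrix.cons_val_fin_one]
    field_simp
    ring_nf
    rw [Real.sq_sqrt (by norm_num : (0:ℝ) ≤ 3)]
    ring
  · simp only [Matrix.of_apply, Matrix.cons_val', Matrix.cons_val_zero, Matrix.cons_val_one, Matrix.head_cons, Matrix.empty_val', Matrix.cons_val_fin_one]
    field_simp
    ring
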